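/- If A: ℝ → ℝ is convex, then the Shakeout regularizer is nonnegative: π(w) = τ ∑_j A(θ_{j−}) + (1−τ) ∑_j A(θ_{j+}) − p·A(θ) ≥ 0. -/
import Mathlib


open Finset

/-- Proposition 2: if `A` is convex, the Shakeout regularizer is
nonnegative:
`π(w) = τ * ∑ j, A(θ_{j-}) + (1-τ) * ∑ j, A(θ_{j+}) - p * A(θ) ≥ 0`. -/
theorem shakeout_regularizer_nonneg (p : ℕ) (w x : Fin p → ℝ) (c τ : ℝ)
    (hc : 0 < c) (hτ : τ ∈ Set.Ioo (0:ℝ) 1)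
    (A : ℝ → ℝ) (hA : ConvexOn ℝ Set.univ A)
    (θ : ℝ) (hθ : θ = ∑ j, w j * x j)
    (q : Fin p → ℝ) (hq : ∀ j, q j = x j * (w j + c * Real.sign (w j))) :
    0 ≤ τ * ∑ j, A (θ - q j) + (1 - τ) * ∑ j, A (θ + τ / (1 - τ) * q j)
        - (p : ℝ) * A θ := by
  obtain ⟨hτ0, hτ1⟩ := hτ
  have h1τ : (0:ℝ) < 1 - τ := by linarith
  have key : ∀ j : Fin p,
      A θ ≤ τ * A (θ - q j) + (1 - τ) * A (θ + τ / (1 - τ) * q j) := by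
    intro j
    have hcomb : τ * (θ - q j) + (1 - τ) * (θ + τ / (1 - τ) * q j) = θ := by
      field_simp
      ring
    have := hA.2 (Set.mem_univ (θ - q j)) (Set.mem_univ (θ + τ / (1 - τ) * q j))
      hτ0.le h1τ.le (by ring)
    simp only [smul_eq_mul] at this
    rwa [hcomb] at this
  have hsum : (p : ℝ) * A θ
      ≤ τ * ∑ j, A (θ - q j) + (1 - τ) * ∑ j, A (θ + τ / (1 - τ) * q j) := by
    calc (p : ℝ) * A θ = ∑ _j : Fin p, A θ := by
          simp [mul_comm]
      _ ≤ ∑ j, (τ * A (θ - q j) + (1 - τ) * A (θ + τ / (1 - τ) * q j)) :=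
          Finset.sum_le_sum fun j _ => key j
      _ = _ := by rw [Finset.sum_add_distrib, Finset.mul_sum, Finset.mul_sum]
  linarith
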